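/- Let F be a field of odd characteristic, n = 2d with d odd, and L/F a field extension of degree m ≥ n. If there exists a self-dual L-linear code C ⊆ Lⁿ, then −1 is a square in L. Conversely, if −1 is a square in F, then there is no self-dual MRD code in Lⁿ. -/

import Mathlib

open Module Matrix

namespace Stmt11Aux

variable {L : Type*} [Field L] {n : ℕ}

/-- The standard dot-product bilinear form on `Fin n → L`. -/
noncomputable def dotF (L : Type*) [Field L] (n : ℕ) : LinearMap.BilinForm L (Fin n → L) :=
  LinearMap.mk₂ L (fun x y => ∑ i, x i * y i)
    (fun x x' y => by simp [add_mul, Finset.sum_add_distrib])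
    (fun c x y => by
      simp only [Pi.smul_apply, smul_eq_mul, Finset.mul_sum]
      exact Finset.sum_congr rfl fun i _ => by ring)
    (fun x y y' => by simp [mul_add, Finset.sum_add_distrib])
    (fun c x y => by
      simp only [Pi.smul_apply, smul_eq_mul, Finset.mul_sum]
      exact Finset.sum_congr rfl fun i _ => by ring)

@[simp] lemma dotF_apply (x y : Fin n → L) : dotF L n x y = ∑ i, x i * y i := rfl

lemma dotF_symm : (dotF L n).IsSymm := ⟨fun x y => by
  simp only [RingHom.id_apply, dotF_apply]
  exact Finset.sum_congr rfl fun i _ => mul_comm _ _⟩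

lemma dotF_nondeg : (dotF L n).Nondegenerate := by
  refine ⟨fun x hx => ?_, fun x hx => ?_⟩ <;>
  · funext i
    have h := hx (Pi.single i 1)
    simpa [dotF_apply, Pi.single_apply, mul_ite, ite_mul, Finset.sum_ite_eq', Finset.sum_ite_eq] using h

/-- A self-dual code in `L^(2d)` has dimension `d`. -/
lemma code_finrank {d : ℕ} (C : Submodule L (Fin (2 * d) → L))
    (hC : ∀ x, x ∈ C ↔ ∀ y ∈ C, ∑ i, x i * y i = 0) : finrank L C = d := by
  have hrefl : (dotF L (2 * d)).IsRefl := dotF_symm.isRefl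
  have horth : (dotF L (2 * d)).orthogonal C = C := by
    ext x
    rw [LinearMap.BilinForm.mem_orthogonal_iff, hC x]
    constructor
    · intro h y hy
      have := h y hy
      rw [dotF_apply] at this
      rw [← this]
      exact Finset.sum_congr rfl fun i _ => mul_comm _ _
    · intro h y hy
      rw [dotF_apply]
      rw [← h y hy]
      exact Finset.sum_congr rfl fun i _ => mul_comm _ _
  have hfr := LinearMap.BilinForm.finrank_orthogonal dotF_nondeg C
  rw [horth] at hfr
  have hle : finrank L C ≤ finrank L (Fin (2 * d) → L) := Submodule.finrank_le C
  have hpi : finrank L (Fin (2 * d) → L) = 2 * d := by simp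
  omega

/-- Extract an invertible `d×d` column submatrix from a matrix with independent rows. -/
lemma exists_cols {dd nn : ℕ} (G : Matrix (Fin dd) (Fin nn) L)
    (hG : LinearIndependent L (fun i => G i)) :
    ∃ e : Fin dd → Fin nn, Function.Injective e ∧ IsUnit (G.submatrix id e) := by
  classical
  have hrank : G.rank = dd := by
    rw [hG.rank_matrix, Fintype.card_fin]
  have hcols : finrank L (Submodule.span L (Set.range Gᵀ)) = dd := by
    have := G.rank_eq_finrank_span_cols
    rw [hrank] at this
    exact this.symm
  obtain ⟨b, hbs, hbspan, hbli⟩ := exists_linearIndependent L (Set.range Gᵀ)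
  have hbfin : b.Finite := hbli.setFinite
  haveI := hbfin.fintype
  have hcard : Fintype.card b = dd := by
    have h1 := linearIndependent_iff_card_eq_finrank_span.mp hbli
    rwa [Subtype.range_coe, Set.finrank, hbspan, hcols] at h1
  let f : Fin dd ≃ b := (Fintype.equivFinOfCardEq hcard).symm
  have hmem : ∀ j : Fin dd, ((f j : Fin dd → L) ∈ Set.range Gᵀ) := fun j => hbs (f j).2
  let e : Fin dd → Fin nn := fun j => (hmem j).choose
  have he : ∀ j, Gᵀ (e j) = (f j : Fin dd → L) := fun j => (hmem j).choose_spec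
  refine ⟨e, ?_, ?_⟩
  · intro j j' hjj'
    have : (f j : Fin dd → L) = (f j' : Fin dd → L) := by rw [← he j, ← he j', hjj']
    exact f.injective (Subtype.ext this)
  · rw [← Matrix.linearIndependent_cols_iff_isUnit]
    have hco : (fun i => (G.submatrix id e)ᵀ i) = fun i => ((f i : Fin dd → L)) := by
      funext i
      rw [← he i]
      rfl
    change LinearIndependent L (fun i => (G.submatrix id e)ᵀ i)
    rw [hco]
    exact hbli.comp f f.injective

/-- Complete an injective `Fin dd → Fin (2*dd)` to an equivalence from the sum type. -/
lemma exists_sum_equiv {dd : ℕ} (e : Fin dd → Fin (2 * dd)) (he : Function.Injective e) :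
    ∃ E : (Fin dd) ⊕ (Fin dd) ≃ Fin (2 * dd), ∀ j, E (Sum.inl j) = e j := by
  classical
  let s : Finset (Fin (2 * dd)) := Finset.univ.map ⟨e, he⟩
  have hs : s.card = dd := by simp [s]
  have hsc : sᶜ.card = dd := by
    rw [Finset.card_compl, hs, Fintype.card_fin]
    omega
  let g : Fin dd ≃ (sᶜ : Finset (Fin (2 * dd))) := (sᶜ.equivFinOfCardEq hsc).symm
  have hmem : ∀ j, e j ∈ s := fun j => by simp [s]
  have hmemc : ∀ j, ((g j : Fin (2 * dd)) ∈ sᶜ) := fun j => (g j).2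
  have hinj : Function.Injective (Sum.elim e (fun j => (g j : Fin (2 * dd)))) := by
    rintro (j | j) (j' | j') h
    · simp only [Sum.elim_inl] at h; exact congrArg Sum.inl (he h)
    · exfalso
      simp only [Sum.elim_inl, Sum.elim_inr] at h
      have := hmemc j'
      rw [← h] at this
      exact (Finset.mem_compl.mp this) (hmem j)
    · exfalso
      simp only [Sum.elim_inl, Sum.elim_inr] at h
      have := hmemc j
      rw [h] at this
      exact (Finset.mem_compl.mp this) (hmem j')
    · simp only [Sum.elim_inr] at h
      exact congrArg Sum.inr (g.injective (Subtype.ext h))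
  have hbij : Function.Bijective (Sum.elim e (fun j => (g j : Fin (2 * dd)))) := by
    rw [Fintype.bijective_iff_injective_and_card]
    exact ⟨hinj, by simp; omega⟩
  exact ⟨Equiv.ofBijective _ hbij, fun j => rfl⟩


lemma part1 {d : ℕ} (hd : Odd d) (C : Submodule L (Fin (2 * d) → L))
    (hC : ∀ x, x ∈ C ↔ ∀ y ∈ C, ∑ i, x i * y i = 0) : IsSquare (-1 : L) := by
  classical
  have hfin : finrank L C = d := code_finrank C hC
  let w : Basis (Fin d) L C := Module.finBasisOfFinrankEq L C hfin
  have hwli : LinearIndependent L (fun i => ((w i : C) : Fin (2 * d) → L)) :=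
    w.linearIndependent.map' C.subtype (Submodule.ker_subtype C)
  let G : Matrix (Fin d) (Fin (2 * d)) L := Matrix.of fun i => ((w i : C) : Fin (2 * d) → L)
  have hGli : LinearIndependent L (fun i => G i) := hwli
  obtain ⟨e, he, hA⟩ := exists_cols G hGli
  obtain ⟨E, hE⟩ := exists_sum_equiv e he
  set A : Matrix (Fin d) (Fin d) L := G.submatrix id e with hAdef
  set B : Matrix (Fin d) (Fin d) L := G.submatrix id (fun j => E (Sum.inr j)) with hBdef
  -- rows of G pairwise orthogonal
  have horth : ∀ i j, ∑ k, G i k * G j k = 0 := by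
    intro i j
    exact (hC _).mp (w i : C).2 _ (w j : C).2
  have hkey : A * Aᵀ + B * Bᵀ = 0 := by
    ext i j
    have hsplit : ∑ k, G i k * G j k
        = (∑ k, G i (e k) * G j (e k)) + ∑ k, G i (E (Sum.inr k)) * G j (E (Sum.inr k)) := by
      rw [← Equiv.sum_comp E (fun k => G i k * G j k), Fintype.sum_sum_type]
      simp only [hE]
    have h0 := horth i j
    rw [hsplit] at h0
    simp only [Matrix.add_apply, Matrix.mul_apply, Matrix.transpose_apply, Matrix.zero_apply,
      Matrix.submatrix_apply, id_eq, hAdef, hBdef]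
    exact h0
  have hAB : A * Aᵀ = -(B * Bᵀ) := by
    rw [eq_neg_iff_add_eq_zero]
    exact hkey
  have hdetA : A.det ≠ 0 := ((Matrix.isUnit_iff_isUnit_det A).mp hA).ne_zero
  have hd2 : A.det * A.det = -(B.det * B.det) := by
    have hcd := congrArg Matrix.det hAB
    rw [Matrix.det_mul, Matrix.det_transpose, Matrix.det_neg, Matrix.det_mul,
      Matrix.det_transpose, Fintype.card_fin, hd.neg_one_pow] at hcd
    linear_combination hcd
  have hdetB : B.det ≠ 0 := by
    intro h
    rw [h, mul_zero, neg_zero, mul_self_eq_zero] at hd2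
    exact hdetA hd2
  refine ⟨A.det * B.det⁻¹, ?_⟩
  field_simp
  linear_combination -hd2


set_option maxHeartbeats 2000000 in
lemma part2 {F L : Type*} [Field F] [Field L] [Algebra F L] [FiniteDimensional F L]
    (p : ℕ) [Fact p.Prime] [CharP F p] (hp : Odd p)
    {d : ℕ} (hd : Odd d) (hsq : IsSquare (-1 : F))
    (C : Submodule L (Fin (2 * d) → L))
    (hdual : ∀ x, x ∈ C ↔ ∀ y ∈ C, ∑ i, x i * y i = 0)
    (hMRD : ∀ c ∈ C, c ≠ 0 → d + 1 ≤ finrank F (Submodule.span F (Set.range c))) :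
    False := by
  classical
  obtain ⟨ε, hε⟩ := hsq
  set η := algebraMap F L ε with hηdef
  have hη : η * η = -1 := by
    rw [hηdef, ← _root_.map_mul, ← hε, _root_.map_neg, _root_.map_one]
  have hfin : finrank L C = d := code_finrank C hdual
  let E : (Fin d) ⊕ (Fin d) ≃ Fin (2 * d) := finSumFinEquiv.trans (finCongr (two_mul d).symm)
  let ι₁ : Fin d → Fin (2 * d) := fun j => E (Sum.inl j)
  let ι₂ : Fin d → Fin (2 * d) := fun j => E (Sum.inr j)
  have hsplit : ∀ f : Fin (2 * d) → L, ∑ k, f k = ∑ j, f (ι₁ j) + ∑ j, f (ι₂ j) := by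
    intro f
    rw [← Equiv.sum_comp E f, Fintype.sum_sum_type]
  -- the two linear "folding" maps
  let φ : (Fin (2 * d) → L) →ₗ[L] (Fin d → L) :=
    { toFun := fun x j => x (ι₁ j) + η * x (ι₂ j)
      map_add' := by intro x y; funext j; simp only [Pi.add_apply]; ring
      map_smul' := by
        intro c x; funext j
        simp only [Pi.smul_apply, smul_eq_mul, RingHom.id_apply]
        ring }
  let ψ : (Fin (2 * d) → L) →ₗ[L] (Fin d → L) :=
    { toFun := fun x j => x (ι₁ j) - η * x (ι₂ j)
      map_add' := by intro x y; funext j; simp only [Pi.add_apply]; ring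
      map_smul' := by
        intro c x; funext j
        simp only [Pi.smul_apply, smul_eq_mul, RingHom.id_apply]
        ring }
  have hφ_apply : ∀ x j, φ x j = x (ι₁ j) + η * x (ι₂ j) := fun _ _ => rfl
  have hψ_apply : ∀ x j, ψ x j = x (ι₁ j) - η * x (ι₂ j) := fun _ _ => rfl
  -- kernel argument from the MRD property
  have hker : ∀ (c : F) (x : Fin (2 * d) → L), x ∈ C →
      (∀ j, x (ι₁ j) = algebraMap F L c * x (ι₂ j)) → x = 0 := by
    intro c x hx hrel
    by_contra hx0
    have h1 : d + 1 ≤ finrank F (Submodule.span F (Set.range x)) := hMRD x hx hx0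
    have h2 : Submodule.span F (Set.range x) ≤ Submodule.span F (Set.range (x ∘ ι₂)) := by
      rw [Submodule.span_le]
      rintro _ ⟨i, rfl⟩
      obtain ⟨s, rfl⟩ := E.surjective i
      cases s with
      | inl j =>
        have : x (E (Sum.inl j)) = c • x (ι₂ j) := by
          rw [Algebra.smul_def]; exact hrel j
        rw [this]
        exact Submodule.smul_mem _ c (Submodule.subset_span ⟨j, rfl⟩)
      | inr j => exact Submodule.subset_span ⟨j, rfl⟩
    have h3 : finrank F (Submodule.span F (Set.range (x ∘ ι₂))) ≤ d := by
      have := finrank_range_le_card (R := F) (x ∘ ι₂)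
      rwa [Set.finrank, Fintype.card_fin] at this
    have h4 := Submodule.finrank_mono h2
    omega
  have hφinj : Function.Injective (φ.comp C.subtype) := by
    rw [injective_iff_map_eq_zero]
    intro a ha
    have ha' : ∀ j, (a : Fin (2 * d) → L) (ι₁ j) = algebraMap F L (-ε) * (a : Fin (2 * d) → L) (ι₂ j) := by
      intro j
      have := congrFun ha j
      rw [LinearMap.comp_apply, Submodule.coe_subtype] at this
      rw [hφ_apply] at this
      rw [_root_.map_neg, ← hηdef]
      simp only [Pi.zero_apply] at this
      linear_combination this
    exact Subtype.coe_injective (by simpa using hker (-ε) a a.2 ha')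
  have hψinj : Function.Injective (ψ.comp C.subtype) := by
    rw [injective_iff_map_eq_zero]
    intro a ha
    have ha' : ∀ j, (a : Fin (2 * d) → L) (ι₁ j) = algebraMap F L ε * (a : Fin (2 * d) → L) (ι₂ j) := by
      intro j
      have := congrFun ha j
      rw [LinearMap.comp_apply, Submodule.coe_subtype] at this
      rw [hψ_apply] at this
      rw [← hηdef]
      simp only [Pi.zero_apply] at this
      linear_combination this
    exact Subtype.coe_injective (by simpa using hker ε a a.2 ha')
  -- basis of C and the two row matrices
  let w : Basis (Fin d) L C := Module.finBasisOfFinrankEq L C hfin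
  let P : Matrix (Fin d) (Fin d) L := Matrix.of fun i => (φ.comp C.subtype) (w i)
  let Q : Matrix (Fin d) (Fin d) L := Matrix.of fun i => (ψ.comp C.subtype) (w i)
  have hPli : LinearIndependent L (fun i => P i) :=
    w.linearIndependent.map' _ (LinearMap.ker_eq_bot.mpr hφinj)
  have hQli : LinearIndependent L (fun i => Q i) :=
    w.linearIndependent.map' _ (LinearMap.ker_eq_bot.mpr hψinj)
  have hP : IsUnit P := Matrix.linearIndependent_rows_iff_isUnit.mp hPli
  have hQ : IsUnit Q := Matrix.linearIndependent_rows_iff_isUnit.mp hQli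
  -- the Gram-type matrix
  set Mg : Matrix (Fin d) (Fin d) L := P * Qᵀ with hMgdef
  -- key bilinear identity
  have hkey : ∀ x y : Fin (2 * d) → L,
      (∑ k, φ x k * ψ y k) + (∑ k, φ y k * ψ x k) = 2 * ∑ i, x i * y i := by
    intro x y
    rw [hsplit (fun i => x i * y i), ← Finset.sum_add_distrib]
    have hterm : ∀ k, φ x k * ψ y k + φ y k * ψ x k
        = 2 * (x (ι₁ k) * y (ι₁ k)) + 2 * (x (ι₂ k) * y (ι₂ k)) := by
      intro k
      rw [hφ_apply, hψ_apply, hφ_apply, hψ_apply]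
      linear_combination (-2 * x (ι₂ k) * y (ι₂ k)) * hη
    calc (∑ k, (φ x k * ψ y k + φ y k * ψ x k))
        = ∑ k, (2 * (x (ι₁ k) * y (ι₁ k)) + 2 * (x (ι₂ k) * y (ι₂ k))) :=
          Finset.sum_congr rfl fun k _ => hterm k
      _ = 2 * (∑ j, x (ι₁ j) * y (ι₁ j) + ∑ j, x (ι₂ j) * y (ι₂ j)) := by
          rw [Finset.sum_add_distrib, ← Finset.mul_sum, ← Finset.mul_sum]
          ring
  -- Mg is skew-symmetric
  have e1 : ∀ i' j', Mg i' j'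
      = ∑ k, φ ((w i' : C) : Fin (2 * d) → L) k * ψ ((w j' : C) : Fin (2 * d) → L) k := by
    intro i' j'
    rw [hMgdef, Matrix.mul_apply]
    simp only [Matrix.transpose_apply]
    rfl
  have hskew : Mgᵀ = -Mg := by
    ext i j
    have hdot : ∑ k, ((w j : C) : Fin (2 * d) → L) k * ((w i : C) : Fin (2 * d) → L) k = 0 :=
      (hdual _).mp (w j : C).2 _ (w i : C).2
    have hk := hkey ((w j : C) : Fin (2 * d) → L) ((w i : C) : Fin (2 * d) → L)
    rw [hdot, mul_zero] at hk
    rw [Matrix.transpose_apply, Matrix.neg_apply, e1 j i, e1 i j]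
    linear_combination hk
  -- determinant is zero by skew-symmetry in odd dimension
  haveI : CharP L p := charP_of_injective_algebraMap (algebraMap F L).injective p
  have h2L : (2 : L) ≠ 0 := by
    intro h
    have h2 : ((2 : ℕ) : L) = 0 := by exact_mod_cast h
    have hdvd : p ∣ 2 := (CharP.cast_eq_zero_iff L p 2).mp h2
    have hp2 : p = 2 := (Nat.prime_dvd_prime_iff_eq (Fact.out) Nat.prime_two).mp hdvd
    rw [hp2] at hp
    exact (Nat.not_odd_iff_even.mpr (by decide)) hp
  have hdet0 : Mg.det = 0 := by
    have h1 : Mg.det = -Mg.det := by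
      conv_lhs => rw [← Matrix.det_transpose Mg]
      rw [hskew, Matrix.det_neg, Fintype.card_fin, hd.neg_one_pow, neg_one_mul]
    have h2 : 2 * Mg.det = 0 := by linear_combination h1
    rcases mul_eq_zero.mp h2 with h | h
    · exact absurd h h2L
    · exact h
  have hdetne : Mg.det ≠ 0 := by
    rw [hMgdef, Matrix.det_mul, Matrix.det_transpose]
    exact mul_ne_zero (((Matrix.isUnit_iff_isUnit_det P).mp hP).ne_zero)
      (((Matrix.isUnit_iff_isUnit_det Q).mp hQ).ne_zero)
  exact hdetne hdet0


end Stmt11Aux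


/-- For `n = 2d` with `d` odd and `F` of odd characteristic: existence of a self-dual
code in `Lⁿ` forces `-1` to be a square in `L`; and if `-1` is a square in `F`, there
is no self-dual MRD code in `Lⁿ`. -/
theorem stmt_11 (F L : Type*) [Field F] [Field L] [Algebra F L] [FiniteDimensional F L]
    (p : ℕ) [Fact p.Prime] [CharP F p] (hp : Odd p)
    (d : ℕ) (hd : Odd d) (hm : 2 * d ≤ Module.finrank F L) :
    ((∃ C : Submodule L (Fin (2 * d) → L),
        ∀ x, x ∈ C ↔ ∀ y ∈ C, ∑ i, x i * y i = 0) → IsSquare (-1 : L)) ∧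
    (IsSquare (-1 : F) →
      ¬ ∃ C : Submodule L (Fin (2 * d) → L),
          (∀ x, x ∈ C ↔ ∀ y ∈ C, ∑ i, x i * y i = 0) ∧
          ∀ c ∈ C, c ≠ 0 →
            d + 1 ≤ Module.finrank F (Submodule.span F (Set.range c))) := by
  constructor
  · rintro ⟨C, hC⟩
    exact Stmt11Aux.part1 hd C hC
  · rintro hsq ⟨C, hC, hMRD⟩
    exact Stmt11Aux.part2 p hp hd hsq C hC hMRD
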